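/- Let X be any normed space, let d ≥ 4 be an integer, let q ∈ [1,∞), and let 1 ≤ p < log(5/2)/log 2. Then m(ℓ_p^d ⊕_q X) ≤ 5. -/

import Mathlib

/-- A set `A` in a normed space is `lam`-equilateral if `lam > 0` and the distance
between any two distinct points of `A` equals `lam`. -/
def EquilateralWith {E : Type*} [NormedAddCommGroup E] (A : Set E) (lam : ℝ) : Prop :=
  0 < lam ∧ A.Pairwise fun x y => ‖x - y‖ = lam

/-- A set is equilateral if it is `lam`-equilateral for some `lam > 0`. -/
def Equilateral {E : Type*} [NormedAddCommGroup E] (A : Set E) : Prop :=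
  ∃ lam : ℝ, EquilateralWith A lam

/-- An equilateral set is maximal if it is not properly contained in any equilateral set. -/
def MaximalEquilateral {E : Type*} [NormedAddCommGroup E] (A : Set E) : Prop :=
  Equilateral A ∧ ∀ B : Set E, Equilateral B → A ⊆ B → B = A

/-- the five 4-dimensional profiles forming the maximal equilateral set -/
def wvec (c : ℝ) : Fin 5 → Fin 4 → ℝ :=
  ![![c, -1, -1, -1], ![c, -1, 1, 1], ![c, 1, -1, 1], ![c, 1, 1, -1], ![0, 0, 0, 0]]

-- 2^p < 5/2 from p < log(5/2)/log 2
lemma two_rpow_lt {p : ℝ} (hp2 : p < Real.log (5 / 2) / Real.log 2) : (2:ℝ) ^ p < 5/2 := by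
  have hlog2 : (0:ℝ) < Real.log 2 := Real.log_pos (by norm_num)
  have h : p * Real.log 2 < Real.log (5/2) := by
    rw [← lt_div_iff₀ hlog2]; exact hp2
  have h2 : (2:ℝ) ^ p = Real.exp (Real.log 2 * p) := Real.rpow_def_of_pos (by norm_num) p
  rw [h2]
  calc Real.exp (Real.log 2 * p) < Real.exp (Real.log (5/2)) := by
        apply Real.exp_lt_exp.mpr; linarith
    _ = 5/2 := Real.exp_log (by norm_num)

-- |u|^p = |v|^p implies |u| = |v|
lemma abs_rpow_inj {p u v : ℝ} (hp0 : 0 < p) (h : |u| ^ p = |v| ^ p) : |u| = |v| := by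
  rcases lt_trichotomy |u| |v| with hlt | he | hgt
  · exact absurd h (ne_of_lt (Real.rpow_lt_rpow (abs_nonneg u) hlt hp0))
  · exact he
  · exact absurd h.symm (ne_of_lt (Real.rpow_lt_rpow (abs_nonneg v) hgt hp0))

lemma F_zero {p a : ℝ} (hp0 : 0 < p) (h : |a - 1| ^ p = |a + 1| ^ p) : a = 0 := by
  have := abs_rpow_inj hp0 h
  rcases abs_eq_abs.mp this with h' | h' <;> linarith

/-- Main real contradiction: no `t` with `|t|^p = |t-c|^p + 3` and `|t|^p ≤ 2^(p+1)`,
where `c = (2^(p+1)-3)^(1/p)`, given `1 ≤ p` and `2^p < 5/2`. -/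
lemma no_solution {p : ℝ} (hp1 : 1 ≤ p) (h52 : (2:ℝ) ^ p < 5/2) (t : ℝ)
    (heq : |t| ^ p = |t - (2 ^ (p+1) - 3) ^ p⁻¹| ^ p + 3)
    (hle : |t| ^ p ≤ 2 ^ (p+1)) : False := by
  have hp0 : (0:ℝ) < p := lt_of_lt_of_le one_pos hp1
  have hpne : p ≠ 0 := ne_of_gt hp0
  have h2p : (2:ℝ) ≤ 2 ^ p := by
    calc (2:ℝ) = 2 ^ (1:ℝ) := (Real.rpow_one 2).symm
    _ ≤ 2 ^ p := Real.rpow_le_rpow_left_iff (by norm_num) |>.mpr hp1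
  have hpp1 : (2:ℝ) ^ (p+1) = 2 ^ p * 2 := by
    rw [Real.rpow_add (by norm_num), Real.rpow_one]
  have h4 : (4:ℝ) ≤ 2 ^ (p+1) := by rw [hpp1]; linarith
  have h5 : (2:ℝ) ^ (p+1) < 5 := by rw [hpp1]; linarith
  set c : ℝ := (2 ^ (p+1) - 3) ^ p⁻¹ with hc
  have hcbase : (0:ℝ) < 2 ^ (p+1) - 3 := by linarith
  have hcpos : 0 < c := Real.rpow_pos_of_pos hcbase _
  have hcp : c ^ p = 2 ^ (p+1) - 3 := Real.rpow_inv_rpow (le_of_lt hcbase) hpne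
  have hcp2 : c ^ p < 2 := by rw [hcp]; linarith
  rcases le_or_gt t (c/2) with hhalf | hhalf
  · -- |t| ≤ |t - c| so LHS ≤ RHS - 3
    have habs : |t| ≤ |t - c| := by
      rcases abs_cases t with ⟨h1,h2⟩ | ⟨h1,h2⟩ <;> rcases abs_cases (t - c) with ⟨h3,h4⟩ | ⟨h3,h4⟩ <;>
        linarith
    have : |t| ^ p ≤ |t - c| ^ p := Real.rpow_le_rpow (abs_nonneg t) habs (le_of_lt hp0)
    linarith
  · rcases lt_or_ge t c with htc | htc
    · -- c/2 < t < c : |t|^p < c^p < 2 but |t|^p ≥ 3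
      have ht0 : 0 < t := lt_of_le_of_lt (by positivity : (0:ℝ) ≤ c/2) hhalf
      have : |t| ^ p < c ^ p := by
        rw [abs_of_pos ht0]
        exact Real.rpow_lt_rpow (le_of_lt ht0) htc hp0
      have h3 : (0:ℝ) ≤ |t - c| ^ p := Real.rpow_nonneg (abs_nonneg _) _
      linarith
    · -- t ≥ c : convexity argument
      set L : ℝ := (2 ^ (p+1)) ^ p⁻¹ with hL
      have hLpos : 0 < L := Real.rpow_pos_of_pos (by linarith) _
      have hLp : L ^ p = 2 ^ (p+1) := Real.rpow_inv_rpow (by linarith) hpne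
      have ht0 : 0 ≤ t := le_trans (le_of_lt hcpos) htc
      have htL : t ≤ L := by
        by_contra hcon
        push_neg at hcon
        have : L ^ p < t ^ p := Real.rpow_lt_rpow (le_of_lt hLpos) hcon hp0
        rw [abs_of_nonneg ht0] at hle
        linarith [hLp]
      have h2cL : 2 * c < L := by
        by_contra hcon
        push_neg at hcon
        have h1 : L ^ p ≤ (2*c) ^ p := Real.rpow_le_rpow (le_of_lt hLpos) hcon (le_of_lt hp0)
        have h2 : ((2:ℝ)*c) ^ p = 2 ^ p * c ^ p := Real.mul_rpow (by norm_num) (le_of_lt hcpos)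
        rw [h2, hcp, hLp] at h1
        -- 2^(p+1) ≤ 2^p * (2^(p+1) - 3); with 2^(p+1) = 2*2^p get 2 ≥ ... contradiction
        rw [hpp1] at h1 h5
        nlinarith [h2p]
      -- convexity of x ^ p on [0,∞)
      have hconv := convexOn_rpow hp1
      set θ : ℝ := c / (L - (t - c)) with hθ
      have hden : 0 < L - (t - c) := by linarith
      have hθ0 : 0 ≤ θ := le_of_lt (div_pos hcpos hden)
      have hθ1 : θ ≤ 1 := by
        rw [div_le_one hden]; linarith
      have hmem1 : t - c ∈ Set.Ici (0:ℝ) := by simp; linarith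
      have hmem2 : L ∈ Set.Ici (0:ℝ) := by simp; linarith
      have key1 := hconv.2 hmem1 hmem2 (by linarith : 0 ≤ 1 - θ) hθ0 (by ring)
      have key2 := hconv.2 hmem1 hmem2 hθ0 (by linarith : 0 ≤ 1 - θ) (by ring)
      have hθmul : θ * (L - (t - c)) = c := div_mul_cancel₀ c (ne_of_gt hden)
      have hcomb1 : (1 - θ) • (t - c) + θ • L = t := by
        simp only [smul_eq_mul]
        have : (1 - θ)*(t-c) + θ*L = (t-c) + θ*(L - (t-c)) := by ring
        rw [this, hθmul]; ring
      have hcomb2 : θ • (t - c) + (1 - θ) • L = L - c := by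
        simp only [smul_eq_mul]
        have : θ*(t-c) + (1-θ)*L = L - θ*(L - (t-c)) := by ring
        rw [this, hθmul]
      rw [hcomb1] at key1
      rw [hcomb2] at key2
      simp only [smul_eq_mul] at key1 key2
      -- sum: t^p + (L-c)^p ≤ (t-c)^p + L^p
      have hsum : t ^ p + (L - c) ^ p ≤ (t - c) ^ p + L ^ p := by linarith
      -- (L-c)^p > c^p
      have hLc : c < L - c := by linarith
      have hLccp : c ^ p < (L - c) ^ p := Real.rpow_lt_rpow (le_of_lt hcpos) hLc hp0
      rw [abs_of_nonneg ht0, abs_of_nonneg (by linarith : (0:ℝ) ≤ t - c)] at heq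
      rw [hLp] at hsum
      rw [hcp] at hLccp
      linarith

/-- Extend a vector in `ℝ⁴` by zeros to `ℝᵈ`. -/
def emb4 {d : ℕ} (v : Fin 4 → ℝ) : Fin d → ℝ := fun j => if h : j.1 < 4 then v ⟨j.1, h⟩ else 0

lemma sum_emb4 {d : ℕ} (hd : 4 ≤ d) {p : ℝ} (y : Fin d → ℝ) (v : Fin 4 → ℝ) :
    ∑ j : Fin d, |y j - emb4 v j| ^ p
    = |y ⟨0, by omega⟩ - v 0| ^ p + |y ⟨1, by omega⟩ - v 1| ^ p + |y ⟨2, by omega⟩ - v 2| ^ p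
      + |y ⟨3, by omega⟩ - v 3| ^ p
      + ∑ j ∈ Finset.univ.filter (fun j : Fin d => ¬ j.1 < 4), |y j| ^ p := by
  rw [← Finset.sum_filter_add_sum_filter_not Finset.univ (fun j : Fin d => j.1 < 4)]
  congr 1
  · have hset : Finset.univ.filter (fun j : Fin d => j.1 < 4)
        = ({⟨0, by omega⟩, ⟨1, by omega⟩, ⟨2, by omega⟩, ⟨3, by omega⟩} : Finset (Fin d)) := by
      ext j
      simp only [Finset.mem_filter, Finset.mem_univ, true_and, Finset.mem_insert,
        Finset.mem_singleton, Fin.ext_iff]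
      omega
    rw [hset]
    rw [Finset.sum_insert (by simp [Fin.ext_iff]), Finset.sum_insert (by simp [Fin.ext_iff]),
      Finset.sum_insert (by simp [Fin.ext_iff]), Finset.sum_singleton]
    have e2 : (⟨2, by omega⟩ : Fin 4) = 2 := rfl
    have e3 : (⟨3, by omega⟩ : Fin 4) = 3 := rfl
    norm_num [emb4, e2, e3]
    ring
  · apply Finset.sum_congr rfl
    intro j hj
    simp only [Finset.mem_filter] at hj
    rw [show emb4 v j = 0 from dif_neg hj.2, sub_zero]

lemma norm_sub_emb4 {d : ℕ} (hd : 4 ≤ d) {p : ℝ} (hp0 : 0 < p)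
    [Fact (1 ≤ ENNReal.ofReal p)] (y : Fin d → ℝ) (v : Fin 4 → ℝ) :
    ‖((WithLp.equiv (ENNReal.ofReal p) (∀ _ : Fin d, ℝ)).symm y -
       (WithLp.equiv (ENNReal.ofReal p) (∀ _ : Fin d, ℝ)).symm (emb4 v) :
       PiLp (ENNReal.ofReal p) (fun _ : Fin d => ℝ))‖
    = (|y ⟨0, by omega⟩ - v 0| ^ p + |y ⟨1, by omega⟩ - v 1| ^ p + |y ⟨2, by omega⟩ - v 2| ^ p
        + |y ⟨3, by omega⟩ - v 3| ^ p
        + ∑ j ∈ Finset.univ.filter (fun j : Fin d => ¬ j.1 < 4), |y j| ^ p) ^ p⁻¹ := by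
  have hPt : (ENNReal.ofReal p).toReal = p := ENNReal.toReal_ofReal hp0.le
  rw [WithLp.equiv_symm_apply, ← WithLp.toLp_sub, PiLp.norm_eq_sum (by rw [hPt]; exact hp0), hPt, one_div]
  congr 1
  rw [← sum_emb4 hd y v]
  apply Finset.sum_congr rfl
  intro j _
  rw [PiLp.toLp_apply, Pi.sub_apply, Real.norm_eq_abs]

set_option maxHeartbeats 2000000 in
theorem statement10_aux (X : Type*) [NormedAddCommGroup X]
    (d : ℕ) (hd : 4 ≤ d) (q p : ℝ) (hq : 1 ≤ q) (hp1 : 1 ≤ p) (h52 : (2:ℝ) ^ p < 5/2)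
    [iP : Fact (1 ≤ ENNReal.ofReal p)] [iQ : Fact (1 ≤ ENNReal.ofReal q)] :
    ∃ A : Set (WithLp (ENNReal.ofReal q)
        ((PiLp (ENNReal.ofReal p) fun _ : Fin d => ℝ) × X)),
      MaximalEquilateral A ∧ A.Finite ∧ A.ncard ≤ 5 := by
  have hp0 : (0:ℝ) < p := lt_of_lt_of_le one_pos hp1
  have hq0 : (0:ℝ) < q := lt_of_lt_of_le one_pos hq
  have hpne : p ≠ 0 := ne_of_gt hp0
  have hqne : q ≠ 0 := ne_of_gt hq0
  have hPt : (ENNReal.ofReal p).toReal = p := ENNReal.toReal_ofReal hp0.le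
  have hQt : (ENNReal.ofReal q).toReal = q := ENNReal.toReal_ofReal hq0.le
  -- basic real facts
  have h2p : (2:ℝ) ≤ 2 ^ p := by
    calc (2:ℝ) = 2 ^ (1:ℝ) := (Real.rpow_one 2).symm
    _ ≤ 2 ^ p := Real.rpow_le_rpow_left_iff (by norm_num) |>.mpr hp1
  have hpp1 : (2:ℝ) ^ (p+1) = 2 ^ p * 2 := by
    rw [Real.rpow_add (by norm_num), Real.rpow_one]
  have h4 : (4:ℝ) ≤ 2 ^ (p+1) := by rw [hpp1]; linarith
  set c : ℝ := (2 ^ (p+1) - 3) ^ p⁻¹ with hc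
  have hcbase : (0:ℝ) < 2 ^ (p+1) - 3 := by linarith
  have hcpos : 0 < c := Real.rpow_pos_of_pos hcbase _
  have hcp : c ^ p = 2 ^ (p+1) - 3 := Real.rpow_inv_rpow (le_of_lt hcbase) hpne
  have habsc : |c| = c := abs_of_pos hcpos
  set lam : ℝ := (2 ^ (p+1)) ^ p⁻¹ with hlam
  have hlampos : 0 < lam := Real.rpow_pos_of_pos (by linarith) _
  have hlamp : lam ^ p = 2 ^ (p+1) := Real.rpow_inv_rpow (by linarith) hpne
  -- the points
  set eE : (Fin d → ℝ) → PiLp (ENNReal.ofReal p) fun _ : Fin d => ℝ :=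
    fun y => (WithLp.equiv (ENNReal.ofReal p) (∀ _ : Fin d, ℝ)).symm y with heE
  set pt : Fin 5 → WithLp (ENNReal.ofReal q)
      ((PiLp (ENNReal.ofReal p) fun _ : Fin d => ℝ) × X) :=
    fun i => (WithLp.equiv (ENNReal.ofReal q) _).symm (eE (emb4 (wvec c i)), 0) with hpt
  -- tail sums of embedded vectors vanish
  have htail : ∀ v : Fin 4 → ℝ,
      ∑ j ∈ Finset.univ.filter (fun j : Fin d => ¬ j.1 < 4), |emb4 v j| ^ p = 0 := by
    intro v
    apply Finset.sum_eq_zero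
    intro j hj
    simp only [Finset.mem_filter] at hj
    rw [show emb4 v j = 0 from dif_neg hj.2, abs_zero, Real.zero_rpow hpne]
  -- heads of embedded vectors
  have hhead : ∀ (v : Fin 4 → ℝ) (k : ℕ) (hk4 : k < 4),
      emb4 (d := d) v ⟨k, by omega⟩ = v ⟨k, hk4⟩ := by
    intro v k hk4
    simp only [emb4]
    rw [dif_pos]
    exact hk4
  -- norm of difference of two embedded points
  have hnormemb : ∀ u v : Fin 4 → ℝ,
      ‖eE (emb4 u) - eE (emb4 v)‖
      = (|u 0 - v 0| ^ p + |u 1 - v 1| ^ p + |u 2 - v 2| ^ p + |u 3 - v 3| ^ p) ^ p⁻¹ := by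
    intro u v
    rw [heE]
    rw [norm_sub_emb4 hd hp0 (emb4 u) v]
    rw [htail u, add_zero]
    rw [hhead u 0 (by omega), hhead u 1 (by omega), hhead u 2 (by omega), hhead u 3 (by omega)]
    rfl
  -- distance between distinct points is lam
  have hpair : ∀ i j : Fin 5, i ≠ j → ‖pt i - pt j‖ = lam := by
    intro i j hij
    have hsub : pt i - pt j
        = (WithLp.equiv (ENNReal.ofReal q) _).symm
            (eE (emb4 (wvec c i)) - eE (emb4 (wvec c j)), 0) := by
      rw [hpt]
      simp only [WithLp.equiv_symm_apply, ← WithLp.toLp_sub, Prod.mk_sub_mk, sub_zero]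
    rw [hsub, WithLp.equiv_symm_apply, WithLp.norm_toLp_fst, hnormemb]
    have hsum : |wvec c i 0 - wvec c j 0| ^ p + |wvec c i 1 - wvec c j 1| ^ p
        + |wvec c i 2 - wvec c j 2| ^ p + |wvec c i 3 - wvec c j 3| ^ p = 2 ^ (p+1) := by
      fin_cases i <;> fin_cases j <;>
        first
          | exact absurd rfl hij
          | (norm_num [wvec, Matrix.cons_val_two, Matrix.cons_val_three, Matrix.vecHead, Matrix.vecTail, habsc, Real.zero_rpow hpne, Real.one_rpow]; linarith [hcp, hpp1])
    rw [hsum]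
  -- the pairwise property on the range
  have hApair : (Set.range pt).Pairwise fun x y => ‖x - y‖ = lam := by
    rintro x ⟨i, rfl⟩ y ⟨j, rfl⟩ hne
    exact hpair i j (fun h => hne (by rw [h]))
  have h01 : pt 0 ≠ pt 1 := by
    intro h
    have h' := hpair 0 1 (by decide)
    rw [h, sub_self, norm_zero] at h'
    exact absurd h'.symm (ne_of_gt hlampos)
  refine ⟨Set.range pt, ⟨⟨lam, hlampos, hApair⟩, ?_⟩, Set.finite_range pt, ?_⟩
  · -- maximality
    rintro B ⟨lamB, hlamB0, hBpair⟩ hAB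
    have hlamB : lamB = lam := by
      have h := hBpair (hAB ⟨0, rfl⟩) (hAB ⟨1, rfl⟩) h01
      rw [← h, hpair 0 1 (by decide)]
    apply Set.Subset.antisymm _ hAB
    intro z hzB
    by_contra hzA
    have hzne : ∀ i, z ≠ pt i := fun i h => hzA ⟨i, h.symm⟩
    have hz : ∀ i, ‖z - pt i‖ = lam := by
      intro i
      have h := hBpair hzB (hAB ⟨i, rfl⟩) (hzne i)
      rw [hlamB] at h
      exact h
    -- decompose z
    set z' := WithLp.equiv (ENNReal.ofReal q) _ z with hz'
    set a := z'.1 with haa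
    set xx := z'.2 with hxx
    set y : Fin d → ℝ := WithLp.equiv (ENNReal.ofReal p) (∀ _ : Fin d, ℝ) a with hy
    have hzdecomp : z = (WithLp.equiv (ENNReal.ofReal q) _).symm (a, xx) := by
      rw [haa, hxx]
      rw [Prod.mk.eta, hz', Equiv.symm_apply_apply]
    have hzi : ∀ i, z - pt i
        = (WithLp.equiv (ENNReal.ofReal q) _).symm (a - eE (emb4 (wvec c i)), xx) := by
      intro i
      rw [hpt]
      conv_lhs => rw [hzdecomp]
      rw [WithLp.equiv_symm_apply, ← WithLp.toLp_sub, Prod.mk_sub_mk, sub_zero]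
    have hNq : ∀ i, ‖a - eE (emb4 (wvec c i))‖ ^ q + ‖xx‖ ^ q = lam ^ q := by
      intro i
      have h1 := hz i
      rw [hzi i, WithLp.prod_norm_eq_add (by rw [hQt]; exact hq0)] at h1
      rw [hQt, one_div] at h1
      simp only [WithLp.equiv_symm_apply, WithLp.toLp_fst, WithLp.toLp_snd] at h1
      have h2 := congrArg (fun s : ℝ => s ^ q) h1
      rwa [Real.rpow_inv_rpow
        (add_nonneg (Real.rpow_nonneg (norm_nonneg _) _) (Real.rpow_nonneg (norm_nonneg _) _))
        hqne] at h2
    have hNeq : ∀ i j : Fin 5, ‖a - eE (emb4 (wvec c i))‖ = ‖a - eE (emb4 (wvec c j))‖ := by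
      intro i j
      have h1 := hNq i
      have h2 := hNq j
      have h3 : ‖a - eE (emb4 (wvec c i))‖ ^ q = ‖a - eE (emb4 (wvec c j))‖ ^ q := by linarith
      have h4 := abs_rpow_inj hq0 (u := ‖a - eE (emb4 (wvec c i))‖)
        (v := ‖a - eE (emb4 (wvec c j))‖)
        (by rwa [abs_of_nonneg (norm_nonneg _), abs_of_nonneg (norm_nonneg _)])
      rwa [abs_of_nonneg (norm_nonneg _), abs_of_nonneg (norm_nonneg _)] at h4
    have hNlam : ∀ i, ‖a - eE (emb4 (wvec c i))‖ ≤ lam := by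
      intro i
      by_contra hcon
      push_neg at hcon
      have h1 : lam ^ q < ‖a - eE (emb4 (wvec c i))‖ ^ q :=
        Real.rpow_lt_rpow hlampos.le hcon hq0
      have h2 := hNq i
      have h3 : (0:ℝ) ≤ ‖xx‖ ^ q := Real.rpow_nonneg (norm_nonneg _) _
      linarith
    -- sums
    have ha : a = eE y := by rw [hy, heE]; exact (Equiv.symm_apply_apply _ _).symm
    set T := ∑ j ∈ Finset.univ.filter (fun j : Fin d => ¬ j.1 < 4), |y j| ^ p with hT
    have hT0 : 0 ≤ T := Finset.sum_nonneg (fun j _ => Real.rpow_nonneg (abs_nonneg _) p)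
    set Y0 : ℝ := y ⟨0, by omega⟩ with hY0
    set Y1 : ℝ := y ⟨1, by omega⟩ with hY1
    set Y2 : ℝ := y ⟨2, by omega⟩ with hY2
    set Y3 : ℝ := y ⟨3, by omega⟩ with hY3
    have hS : ∀ i, ‖a - eE (emb4 (wvec c i))‖ ^ p
        = |Y0 - wvec c i 0| ^ p + |Y1 - wvec c i 1| ^ p + |Y2 - wvec c i 2| ^ p
          + |Y3 - wvec c i 3| ^ p + T := by
      intro i
      have hnn : (0:ℝ) ≤ |Y0 - wvec c i 0| ^ p + |Y1 - wvec c i 1| ^ p + |Y2 - wvec c i 2| ^ p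
          + |Y3 - wvec c i 3| ^ p + T := by
        have r0 : (0:ℝ) ≤ |Y0 - wvec c i 0| ^ p := Real.rpow_nonneg (abs_nonneg _) _
        have r1 : (0:ℝ) ≤ |Y1 - wvec c i 1| ^ p := Real.rpow_nonneg (abs_nonneg _) _
        have r2 : (0:ℝ) ≤ |Y2 - wvec c i 2| ^ p := Real.rpow_nonneg (abs_nonneg _) _
        have r3 : (0:ℝ) ≤ |Y3 - wvec c i 3| ^ p := Real.rpow_nonneg (abs_nonneg _) _
        linarith
      rw [ha, heE, norm_sub_emb4 hd hp0 y (wvec c i), hY0, hY1, hY2, hY3, hT]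
      rw [Real.rpow_inv_rpow (by rw [hY0, hY1, hY2, hY3, hT] at hnn; exact hnn) hpne]
    -- tetra equations force Y1 = Y2 = Y3 = 0
    have e01 : ‖a - eE (emb4 (wvec c 0))‖ ^ p = ‖a - eE (emb4 (wvec c 1))‖ ^ p := by
      rw [hNeq 0 1]
    have e02 : ‖a - eE (emb4 (wvec c 0))‖ ^ p = ‖a - eE (emb4 (wvec c 2))‖ ^ p := by
      rw [hNeq 0 2]
    have e03 : ‖a - eE (emb4 (wvec c 0))‖ ^ p = ‖a - eE (emb4 (wvec c 3))‖ ^ p := by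
      rw [hNeq 0 3]
    have e04 : ‖a - eE (emb4 (wvec c 0))‖ ^ p = ‖a - eE (emb4 (wvec c 4))‖ ^ p := by
      rw [hNeq 0 4]
    rw [hS 0, hS 1] at e01
    rw [hS 0, hS 2] at e02
    rw [hS 0, hS 3] at e03
    rw [hS 0, hS 4] at e04
    simp only [wvec, Matrix.cons_val] at e01 e02 e03 e04
    norm_num at e01 e02 e03 e04
    have f23 : (|Y2 - 1| ^ p - |Y2 + 1| ^ p) + (|Y3 - 1| ^ p - |Y3 + 1| ^ p) = 0 := by linarith
    have f13 : (|Y1 - 1| ^ p - |Y1 + 1| ^ p) + (|Y3 - 1| ^ p - |Y3 + 1| ^ p) = 0 := by linarith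
    have f12 : (|Y1 - 1| ^ p - |Y1 + 1| ^ p) + (|Y2 - 1| ^ p - |Y2 + 1| ^ p) = 0 := by linarith
    have hY1z : Y1 = 0 := F_zero hp0 (by linarith)
    have hY2z : Y2 = 0 := F_zero hp0 (by linarith)
    have hY3z : Y3 = 0 := F_zero hp0 (by linarith)
    rw [hY1z, hY2z, hY3z] at e04
    norm_num [Real.one_rpow, Real.zero_rpow hpne] at e04
    -- final contradiction
    have hb : ‖a - eE (emb4 (wvec c 4))‖ ^ p ≤ 2 ^ (p + 1) := by
      rw [← hlamp]
      exact Real.rpow_le_rpow (norm_nonneg _) (hNlam 4) hp0.le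
    rw [hS 4] at hb
    simp only [wvec, Matrix.cons_val] at hb
    norm_num at hb
    rw [hY1z, hY2z, hY3z] at hb
    norm_num [Real.zero_rpow hpne] at hb
    have heqq : |Y0| ^ p = |Y0 - c| ^ p + 3 := by linarith
    have hlee : |Y0| ^ p ≤ 2 ^ (p + 1) := by linarith
    rw [hc] at heqq
    exact no_solution hp1 h52 Y0 heqq hlee
  · -- cardinality
    have hsubs : Set.range pt ⊆ ({pt 0, pt 1, pt 2, pt 3, pt 4} :
        Set (WithLp (ENNReal.ofReal q) ((PiLp (ENNReal.ofReal p) fun _ : Fin d => ℝ) × X))) := by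
      rintro x ⟨i, rfl⟩
      fin_cases i <;> simp
    have hfin5 : ({pt 0, pt 1, pt 2, pt 3, pt 4} :
        Set (WithLp (ENNReal.ofReal q) ((PiLp (ENNReal.ofReal p) fun _ : Fin d => ℝ) × X))).Finite :=
      (((((Set.finite_singleton (pt 4)).insert (pt 3)).insert (pt 2)).insert (pt 1)).insert (pt 0))
    refine le_trans (Set.ncard_le_ncard hsubs hfin5) ?_
    calc ({pt 0, pt 1, pt 2, pt 3, pt 4} : Set _).ncard
        ≤ ({pt 1, pt 2, pt 3, pt 4} : Set _).ncard + 1 := Set.ncard_insert_le _ _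
      _ ≤ (({pt 2, pt 3, pt 4} : Set _).ncard + 1) + 1 := by
          have := Set.ncard_insert_le (pt 1) ({pt 2, pt 3, pt 4} : Set _)
          omega
      _ ≤ ((({pt 3, pt 4} : Set _).ncard + 1) + 1) + 1 := by
          have := Set.ncard_insert_le (pt 2) ({pt 3, pt 4} : Set _)
          omega
      _ ≤ (((({pt 4} : Set _).ncard + 1) + 1) + 1) + 1 := by
          have := Set.ncard_insert_le (pt 3) ({pt 4} : Set _)
          omega
      _ = 5 := by rw [Set.ncard_singleton]


/-- Let `X` be any normed space, `d ≥ 4`, `q ∈ [1, ∞)`, and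
`1 ≤ p < log(5/2)/log 2`. Then `m(ℓ_p^d ⊕_q X) ≤ 5`. -/
theorem statement10 (X : Type*) [NormedAddCommGroup X] [NormedSpace ℝ X]
    (d : ℕ) (hd : 4 ≤ d) (q : ℝ) (hq : 1 ≤ q)
    (p : ℝ) (hp1 : 1 ≤ p) (hp2 : p < Real.log (5 / 2) / Real.log 2) :
    letI : Fact (1 ≤ ENNReal.ofReal p) := ⟨ENNReal.one_le_ofReal.mpr hp1⟩
    letI : Fact (1 ≤ ENNReal.ofReal q) := ⟨ENNReal.one_le_ofReal.mpr hq⟩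
    ∃ A : Set (WithLp (ENNReal.ofReal q)
        ((PiLp (ENNReal.ofReal p) fun _ : Fin d => ℝ) × X)),
      MaximalEquilateral A ∧ A.Finite ∧ A.ncard ≤ 5 := by
  have h52 : (2:ℝ) ^ p < 5/2 := two_rpow_lt hp2
  letI : Fact (1 ≤ ENNReal.ofReal p) := ⟨ENNReal.one_le_ofReal.mpr hp1⟩
  letI : Fact (1 ≤ ENNReal.ofReal q) := ⟨ENNReal.one_le_ofReal.mpr hq⟩
  exact statement10_aux X d hd q p hq hp1 h52
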